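/- arXiv:2206.07175 — 2 statements merged into one kernel-verified Lean document; each statement's English description precedes it below -/
import Mathlib

section
/- (Theorem 2.3, first identity, q-case.) Let n ∈ ℕ, β₁, β₂ ∈ (0,1) and let m₁ be a natural number with m₁ ≤ n. Then the m₁-th q-factorial moment of the first coordinate of the q-trinomial distribution of the second kind satisfies ∑_{x₁=0}^{n} ∑_{x₂=0}^{n−x₁} [x₁]_{m₁,q} · u(x₁,x₂) = [n]_{m₁,q} · β₁^{m₁}. -/
open Finset

/-- q-integer `[k]_q = (1 - q^k)/(1 - q)`. -/
noncomputable def qInt (q : ℝ) (k : ℤ) : ℝ := (1 - q ^ k) / (1 - q)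

/-- q-factorial `[n]_q! = ∏_{i=1}^n [i]_q`. -/
noncomputable def qFact (q : ℝ) (n : ℕ) : ℝ := ∏ i ∈ Finset.Icc 1 n, qInt q (i : ℤ)

/-- q-binomial coefficient `C_q(n,k)`. -/
noncomputable def qBinom (q : ℝ) (n k : ℕ) : ℝ := qFact q n / (qFact q k * qFact q (n - k))

/-- q-falling factorial `[u]_{m,q} = ∏_{i=1}^m [u-i+1]_q`. -/
noncomputable def qFall (q : ℝ) (u : ℤ) (m : ℕ) : ℝ := ∏ i ∈ Finset.Icc 1 m, qInt q (u - (i : ℤ) + 1)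

/-- `[k]_{q⁻¹} = q^{1-k} · [k]_q`. -/
noncomputable def qIntInv (q : ℝ) (k : ℤ) : ℝ := q ^ (1 - k) * qInt q k

/-- `[u]_{m,q⁻¹} = ∏_{i=1}^m [u-i+1]_{q⁻¹}`. -/
noncomputable def qFallInv (q : ℝ) (u : ℤ) (m : ℕ) : ℝ := ∏ i ∈ Finset.Icc 1 m, qIntInv q (u - (i : ℤ) + 1)

/-- `b(k) = k(k-1)/2`. -/
def bb (k : ℕ) : ℕ := k * (k - 1) / 2

/-- `⟨1 ⊕ α⟩_m = ∏_{i=1}^m (1 + α q^{i-1})`. -/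
noncomputable def oplus (q α : ℝ) (m : ℕ) : ℝ := ∏ i ∈ Finset.Icc 1 m, (1 + α * q ^ (i - 1))

/-- `⟨1 ⊖ β⟩_m = ∏_{i=1}^m (1 - β q^{i-1})`. -/
noncomputable def ominus (q β : ℝ) (m : ℕ) : ℝ := ∏ i ∈ Finset.Icc 1 m, (1 - β * q ^ (i - 1))

/-- q-trinomial coefficient `T_q(n; x₁, x₂)`. -/
noncomputable def qTri (q : ℝ) (n x1 x2 : ℕ) : ℝ :=
  qFact q n / (qFact q x1 * qFact q x2 * qFact q (n - x1 - x2))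

/-- pmf of the q-trinomial distribution of the second kind. -/
noncomputable def upmf (q b1 b2 : ℝ) (n x1 x2 : ℕ) : ℝ :=
  qTri q n x1 x2 * b1 ^ x1 * b2 ^ x2 * ominus q b1 (n - x1) * ominus q b2 (n - x1 - x2)

section Helpers

variable {q : ℝ}

lemma qInt_cast (i : ℕ) : qInt q (i : ℤ) = (1 - q ^ i) / (1 - q) := by
  simp [qInt]

lemma qInt_pos' (hq0 : 0 < q) (hq1 : q < 1) (i : ℕ) (hi : 1 ≤ i) : 0 < qInt q (i : ℤ) := by
  rw [qInt_cast]
  apply div_pos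
  · have : q ^ i < 1 := pow_lt_one₀ hq0.le hq1 (by omega)
    linarith
  · linarith

lemma qFact_pos (hq0 : 0 < q) (hq1 : q < 1) (n : ℕ) : 0 < qFact q n := by
  apply Finset.prod_pos
  intro i hi
  exact qInt_pos' hq0 hq1 i (Finset.mem_Icc.mp hi).1

lemma qFact_ne (hq0 : 0 < q) (hq1 : q < 1) (n : ℕ) : qFact q n ≠ 0 :=
  (qFact_pos hq0 hq1 n).ne'

lemma qFact_zero : qFact q 0 = 1 := by simp [qFact]

lemma qFact_succ (n : ℕ) : qFact q (n + 1) = qFact q n * qInt q ((n : ℤ) + 1) := by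
  rw [qFact, Finset.prod_Icc_succ_top (by omega : 1 ≤ n + 1)]
  push_cast
  rfl

lemma ominus_succ (θ : ℝ) (m : ℕ) : ominus q θ (m + 1) = ominus q θ m * (1 - θ * q ^ m) := by
  rw [ominus, Finset.prod_Icc_succ_top (by omega : 1 ≤ m + 1)]
  simp [ominus]

lemma ominus_zero (θ : ℝ) : ominus q θ 0 = 1 := by simp [ominus]

lemma qBinom_zero (hq0 : 0 < q) (hq1 : q < 1) (n : ℕ) : qBinom q n 0 = 1 := by
  simp [qBinom, qFact_zero]
  exact qFact_ne hq0 hq1 n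

lemma qBinom_self (hq0 : 0 < q) (hq1 : q < 1) (n : ℕ) : qBinom q n n = 1 := by
  simp [qBinom, qFact_zero]
  exact qFact_ne hq0 hq1 n

lemma qInt_split (hq0 : 0 < q) (hq1 : q < 1) (n k : ℕ) (h : k + 1 ≤ n) :
    qInt q ((n : ℤ) + 1) = qInt q ((n - k : ℕ) : ℤ) + q ^ (n - k) * qInt q ((k : ℤ) + 1) := by
  have h1 : ((n : ℤ) + 1) = (((n + 1 : ℕ)) : ℤ) := by push_cast; ring
  have h2 : ((k : ℤ) + 1) = (((k + 1 : ℕ)) : ℤ) := by push_cast; ring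
  rw [h1, h2, qInt_cast, qInt_cast, qInt_cast]
  have hq : (1 : ℝ) - q ≠ 0 := by linarith
  field_simp
  have hpow : q ^ (n - k) * q ^ (k + 1) = q ^ (n + 1) := by
    rw [← pow_add]; congr 1; omega
  linear_combination hpow

lemma pascal (hq0 : 0 < q) (hq1 : q < 1) {n k : ℕ} (h : k + 1 ≤ n) :
    qBinom q (n + 1) (k + 1) = qBinom q n (k + 1) + q ^ (n - k) * qBinom q n k := by
  have e1 : qFact q (n + 1) = qFact q n * qInt q ((n : ℤ) + 1) := qFact_succ n
  have e2 : qFact q (k + 1) = qFact q k * qInt q ((k : ℤ) + 1) := qFact_succ k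
  have e3 : qFact q (n - k) = qFact q (n - k - 1) * qInt q ((n - k : ℕ) : ℤ) := by
    conv_lhs => rw [show n - k = (n - k - 1) + 1 from by omega]
    rw [qFact_succ]
    congr 1
    congr 1
    omega
  have hne1 := qFact_ne hq0 hq1 k
  have hne2 := qFact_ne hq0 hq1 (n - k - 1)
  have hne3 : qInt q ((k : ℤ) + 1) ≠ 0 := by
    have : ((k : ℤ) + 1) = (((k + 1 : ℕ)) : ℤ) := by push_cast; ring
    rw [this]; exact (qInt_pos' hq0 hq1 (k + 1) (by omega)).ne'
  have hne4 : qInt q ((n - k : ℕ) : ℤ) ≠ 0 := (qInt_pos' hq0 hq1 (n - k) (by omega)).ne'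
  unfold qBinom
  rw [show (n + 1) - (k + 1) = n - k by omega, show n - (k + 1) = n - k - 1 by omega,
    e1, e2, e3, qInt_split hq0 hq1 n k h]
  field_simp

lemma binom_norm (hq0 : 0 < q) (hq1 : q < 1) (θ : ℝ) (n : ℕ) :
    ∑ k ∈ Finset.range (n + 1), qBinom q n k * θ ^ k * ominus q θ (n - k) = 1 := by
  induction n with
  | zero => simp [qBinom_zero hq0 hq1, ominus_zero]
  | succ n ih =>
    have step : ∑ k ∈ Finset.range (n + 2),
        qBinom q (n + 1) k * θ ^ k * ominus q θ (n + 1 - k)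
        = ∑ k ∈ Finset.range (n + 1),
            ((qBinom q n k * θ ^ k * ominus q θ (n - k)) * (1 - θ * q ^ (n - k))
              + θ * q ^ (n - k) * (qBinom q n k * θ ^ k * ominus q θ (n - k))) := by
      rw [Finset.sum_add_distrib, Finset.sum_range_succ (n := n + 1),
        Finset.sum_range_succ (f := fun k => θ * q ^ (n - k) *
          (qBinom q n k * θ ^ k * ominus q θ (n - k)))]
      have hb : θ * q ^ (n - n) * (qBinom q n n * θ ^ n * ominus q θ (n - n)) = θ ^ (n + 1) := by
        simp [qBinom_self hq0 hq1, ominus_zero]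
        ring
      have hf : qBinom q (n + 1) (n + 1) * θ ^ (n + 1) * ominus q θ (n + 1 - (n + 1))
          = θ ^ (n + 1) := by
        simp [qBinom_self hq0 hq1, ominus_zero]
      rw [hb, hf]
      have main : ∑ k ∈ Finset.range (n + 1),
          qBinom q (n + 1) k * θ ^ k * ominus q θ (n + 1 - k)
          = ∑ k ∈ Finset.range (n + 1),
              (qBinom q n k * θ ^ k * ominus q θ (n - k)) * (1 - θ * q ^ (n - k))
            + ∑ k ∈ Finset.range n,
              θ * q ^ (n - k) * (qBinom q n k * θ ^ k * ominus q θ (n - k)) := by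
        rw [Finset.sum_range_succ' (n := n), Finset.sum_range_succ'
          (f := fun k => (qBinom q n k * θ ^ k * ominus q θ (n - k)) * (1 - θ * q ^ (n - k)))]
        have h0 : qBinom q (n + 1) 0 * θ ^ 0 * ominus q θ (n + 1 - 0)
            = qBinom q n 0 * θ ^ 0 * ominus q θ (n - 0) * (1 - θ * q ^ (n - 0)) := by
          simp [qBinom_zero hq0 hq1, ominus_succ]
        rw [h0]
        have hterm : ∀ k ∈ Finset.range n,
            qBinom q (n + 1) (k + 1) * θ ^ (k + 1) * ominus q θ (n + 1 - (k + 1))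
            = (qBinom q n (k + 1) * θ ^ (k + 1) * ominus q θ (n - (k + 1)))
                * (1 - θ * q ^ (n - (k + 1)))
              + θ * q ^ (n - k) * (qBinom q n k * θ ^ k * ominus q θ (n - k)) := by
          intro k hk
          rw [Finset.mem_range] at hk
          rw [pascal hq0 hq1 (by omega : k + 1 ≤ n)]
          rw [show n + 1 - (k + 1) = n - k by omega]
          have hom : ominus q θ (n - k) = ominus q θ (n - (k + 1)) * (1 - θ * q ^ (n - (k + 1))) := by
            rw [show n - k = (n - (k + 1)) + 1 by omega, ominus_succ]
          rw [hom]
          ring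
        rw [Finset.sum_congr rfl hterm, Finset.sum_add_distrib]
        ring
      rw [main]
      ring
    rw [step]
    have : ∀ k ∈ Finset.range (n + 1),
        (qBinom q n k * θ ^ k * ominus q θ (n - k)) * (1 - θ * q ^ (n - k))
          + θ * q ^ (n - k) * (qBinom q n k * θ ^ k * ominus q θ (n - k))
        = qBinom q n k * θ ^ k * ominus q θ (n - k) := by
      intro k _
      ring
    rw [Finset.sum_congr rfl this]
    exact ih

lemma qTri_eq (hq0 : 0 < q) (hq1 : q < 1) (n x1 x2 : ℕ) :
    qTri q n x1 x2 = qBinom q n x1 * qBinom q (n - x1) x2 := by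
  unfold qTri qBinom
  have h1 := qFact_ne hq0 hq1 x1
  have h2 := qFact_ne hq0 hq1 x2
  have h3 := qFact_ne hq0 hq1 (n - x1)
  have h4 := qFact_ne hq0 hq1 (n - x1 - x2)
  field_simp

lemma tri_norm (hq0 : 0 < q) (hq1 : q < 1) (b1 b2 : ℝ) (n : ℕ) :
    ∑ x1 ∈ Finset.range (n + 1), ∑ x2 ∈ Finset.range (n - x1 + 1),
      upmf q b1 b2 n x1 x2 = 1 := by
  have : ∀ x1 ∈ Finset.range (n + 1),
      ∑ x2 ∈ Finset.range (n - x1 + 1), upmf q b1 b2 n x1 x2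
      = qBinom q n x1 * b1 ^ x1 * ominus q b1 (n - x1) := by
    intro x1 _
    have : ∀ x2 ∈ Finset.range (n - x1 + 1),
        upmf q b1 b2 n x1 x2 = (qBinom q n x1 * b1 ^ x1 * ominus q b1 (n - x1)) *
          (qBinom q (n - x1) x2 * b2 ^ x2 * ominus q b2 (n - x1 - x2)) := by
      intro x2 _
      unfold upmf
      rw [qTri_eq hq0 hq1]
      ring
    rw [Finset.sum_congr rfl this, ← Finset.mul_sum, binom_norm hq0 hq1 b2 (n - x1), mul_one]
  rw [Finset.sum_congr rfl this, binom_norm hq0 hq1 b1 n]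

lemma qFall_zero_of_lt (x m : ℕ) (h : x < m) : qFall q (x : ℤ) m = 0 := by
  apply Finset.prod_eq_zero (i := x + 1) (Finset.mem_Icc.mpr ⟨by omega, by omega⟩)
  have : ((x : ℤ) - ((x + 1 : ℕ) : ℤ) + 1) = 0 := by push_cast; ring
  rw [this]
  simp [qInt]

lemma qFact_eq_qFall (x m : ℕ) (h : m ≤ x) :
    qFact q x = qFact q (x - m) * qFall q (x : ℤ) m := by
  induction m with
  | zero => simp [qFall]
  | succ m ih =>
    have hm : m ≤ x := by omega
    rw [ih hm]
    have e1 : qFall q (x : ℤ) (m + 1) = qFall q (x : ℤ) m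
        * qInt q ((x : ℤ) - ((m + 1 : ℕ) : ℤ) + 1) := by
      rw [qFall, Finset.prod_Icc_succ_top (by omega : 1 ≤ m + 1)]
      rfl
    have e2 : qFact q (x - m) = qFact q (x - (m + 1))
        * qInt q ((x : ℤ) - ((m + 1 : ℕ) : ℤ) + 1) := by
      rw [show x - m = (x - (m + 1)) + 1 by omega, qFact_succ]
      congr 1
      push_cast [Nat.cast_sub (by omega : m + 1 ≤ x)]
      ring
    rw [e1, e2]
    ring

lemma qFall_eq_div (hq0 : 0 < q) (hq1 : q < 1) (x m : ℕ) (h : m ≤ x) :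
    qFall q (x : ℤ) m = qFact q x / qFact q (x - m) := by
  rw [qFact_eq_qFall x m h]
  field_simp [qFact_ne hq0 hq1 (x - m)]

lemma key_lemma (hq0 : 0 < q) (hq1 : q < 1) {n x1 x2 m : ℕ} (hm : m ≤ x1) (hx : x1 + x2 ≤ n) :
    qFall q (x1 : ℤ) m * qTri q n x1 x2 = qFall q (n : ℤ) m * qTri q (n - m) (x1 - m) x2 := by
  have hmn : m ≤ n := by omega
  rw [qFall_eq_div hq0 hq1 x1 m hm, qFall_eq_div hq0 hq1 n m hmn]
  unfold qTri
  rw [show (n - m) - (x1 - m) - x2 = n - x1 - x2 by omega]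
  have h1 := qFact_ne hq0 hq1 (x1 - m)
  have h2 := qFact_ne hq0 hq1 (n - m)
  have h3 := qFact_ne hq0 hq1 x1
  have h4 := qFact_ne hq0 hq1 x2
  have h5 := qFact_ne hq0 hq1 (n - x1 - x2)
  field_simp

end Helpers

theorem stmt10 (q : ℝ) (hq0 : 0 < q) (hq1 : q < 1) (n : ℕ) (β1 β2 : ℝ)
    (hβ1 : 0 < β1) (hβ1' : β1 < 1) (hβ2 : 0 < β2) (hβ2' : β2 < 1)
    (m1 : ℕ) (hm1 : m1 ≤ n) :
    ∑ x1 ∈ Finset.range (n + 1), ∑ x2 ∈ Finset.range (n - x1 + 1),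
      qFall q (x1 : ℤ) m1 * upmf q β1 β2 n x1 x2
      = qFall q (n : ℤ) m1 * β1 ^ m1 := by
  set F : ℕ → ℝ := fun x1 => ∑ x2 ∈ Finset.range (n - x1 + 1),
    qFall q (x1 : ℤ) m1 * upmf q β1 β2 n x1 x2 with hF
  show ∑ x1 ∈ Finset.range (n + 1), F x1 = _
  have hsub : Finset.Ico m1 (n + 1) ⊆ Finset.range (n + 1) := by
    intro x hx
    rw [Finset.mem_Ico] at hx
    exact Finset.mem_range.mpr hx.2
  have hzero : ∀ x ∈ Finset.range (n + 1), x ∉ Finset.Ico m1 (n + 1) → F x = 0 := by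
    intro x hx hx'
    rw [Finset.mem_range] at hx
    rw [Finset.mem_Ico] at hx'
    have hxm : x < m1 := by omega
    apply Finset.sum_eq_zero
    intro x2 _
    rw [qFall_zero_of_lt x m1 hxm, zero_mul]
  rw [← Finset.sum_subset hsub hzero, Finset.sum_Ico_eq_sum_range]
  have hFy : ∀ y ∈ Finset.range (n + 1 - m1),
      F (m1 + y) = qFall q (n : ℤ) m1 * β1 ^ m1 *
        ∑ x2 ∈ Finset.range ((n - m1) - y + 1), upmf q β1 β2 (n - m1) y x2 := by
    intro y hy
    rw [Finset.mem_range] at hy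
    have hyn : y ≤ n - m1 := by omega
    rw [hF]
    simp only
    rw [show n - (m1 + y) + 1 = (n - m1) - y + 1 by omega, Finset.mul_sum]
    apply Finset.sum_congr rfl
    intro x2 hx2
    rw [Finset.mem_range] at hx2
    unfold upmf
    have hkey : qFall q ((m1 + y : ℕ) : ℤ) m1 * qTri q n (m1 + y) x2
        = qFall q (n : ℤ) m1 * qTri q (n - m1) y x2 := by
      have := key_lemma hq0 hq1 (n := n) (x1 := m1 + y) (x2 := x2) (m := m1)
        (by omega) (by omega)
      rwa [show m1 + y - m1 = y by omega] at this
    rw [show n - (m1 + y) = (n - m1) - y by omega]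
    linear_combination (β1 ^ m1 * β1 ^ y * β2 ^ x2 * ominus q β1 (n - m1 - y) *
      ominus q β2 (n - m1 - y - x2)) * hkey
  rw [Finset.sum_congr rfl hFy, ← Finset.mul_sum,
    show n + 1 - m1 = (n - m1) + 1 by omega, tri_norm hq0 hq1 β1 β2 (n - m1), mul_one]
end

section
/- (Theorem 2.4, first identity, q-case.) Let n ≥ 1 be a natural number, β₁, β₂ ∈ (0,1) and m₂ ∈ ℕ. Then the double series over all pairs (v₁,v₂) ∈ ℕ × ℕ of [v₂]_{m₂,q} · v(v₁,v₂) converges, with sum equal to [n+m₂−1]_{m₂,q} · β₂^{m₂} / ∏_{i=1}^{m₂} (1 − β₂·q^{n+i−1}). -/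
open Finset

/-- pmf of the negative q-trinomial distribution of the second kind. -/
noncomputable def vpmf (q b1 b2 : ℝ) (n v1 v2 : ℕ) : ℝ :=
  (qFact q (n + v1 + v2 - 1) / (qFact q v1 * qFact q v2 * qFact q (n - 1))) *
    b1 ^ v1 * b2 ^ v2 * ominus q b1 (n + v2) * ominus q b2 n

/-! ### Auxiliary machinery -/

/-- `qc q N v = C_q(N+v-1, v)` in product form. -/
noncomputable def qc (q : ℝ) (N v : ℕ) : ℝ :=
  ∏ i ∈ Finset.range v, (1 - q ^ (N + i)) / (1 - q ^ (i + 1))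

lemma prod_Icc_one (f : ℕ → ℝ) (m : ℕ) :
    ∏ i ∈ Finset.Icc 1 m, f i = ∏ i ∈ Finset.range m, f (i + 1) := by
  induction m with
  | zero => simp
  | succ m ih => rw [Finset.prod_Icc_succ_top (by omega), ih, Finset.prod_range_succ]

section
variable {q : ℝ} (hq0 : 0 < q) (hq1 : q < 1)
include hq0 hq1

lemma qFact_eq (m : ℕ) : qFact q m = ∏ i ∈ Finset.range m, ((1 - q ^ (i+1)) / (1 - q)) := by
  rw [qFact, prod_Icc_one]
  refine Finset.prod_congr rfl fun i _ => ?_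
  rw [qInt, ← zpow_natCast q (i+1)]

lemma fact_pos (i : ℕ) : (0:ℝ) < 1 - q ^ (i+1) := by
  have := pow_lt_one₀ hq0.le hq1 (n := i+1) (by omega)
  linarith

lemma qFact_pos_s16 (m : ℕ) : 0 < qFact q m := by
  rw [qFact_eq hq0 hq1]
  exact Finset.prod_pos fun i _ => div_pos (fact_pos hq0 hq1 i) (by linarith)

lemma qFact_mul (a b : ℕ) : qFact q (a + b) = qFact q a * qFact q b * qc q (a+1) b := by
  rw [qFact_eq hq0 hq1, qFact_eq hq0 hq1, qFact_eq hq0 hq1, Finset.prod_range_add, qc,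
    mul_assoc, ← Finset.prod_mul_distrib]
  refine congrArg _ (Finset.prod_congr rfl fun i _ => ?_)
  have h1 : (1:ℝ) - q ^ (i+1) ≠ 0 := ne_of_gt (fact_pos hq0 hq1 i)
  have h2 : (1:ℝ) - q ≠ 0 := by linarith
  field_simp
  ring

lemma qc_nonneg (N v : ℕ) : 0 ≤ qc q N v := by
  refine Finset.prod_nonneg fun i _ => div_nonneg ?_ (le_of_lt (fact_pos hq0 hq1 i))
  have := pow_le_one₀ hq0.le hq1.le (n := N + i)
  linarith

lemma qFall_eq {u m : ℕ} (h : m ≤ u) : qFact q u = qFact q (u - m) * qFall q (u:ℤ) m := by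
  induction m with
  | zero => simp [qFall]
  | succ m ih =>
    have hm : m ≤ u := by omega
    have hsucc : qFall q (u:ℤ) (m+1) = qFall q (u:ℤ) m * qInt q ((u - m : ℕ) : ℤ) := by
      rw [qFall, Finset.prod_Icc_succ_top (by omega : 1 ≤ m + 1), ← qFall]
      congr 2
      push_cast; omega
    have h2 : qFact q ((u - (m+1)) + 1) = qFact q (u - (m+1)) *
        qInt q (((u - (m+1)) + 1 : ℕ) : ℤ) := by
      rw [qFact, Finset.prod_Icc_succ_top (by omega : 1 ≤ (u - (m+1)) + 1), ← qFact]
    rw [hsucc, ih hm, show u - m = u - (m+1) + 1 by omega, h2]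
    ring

lemma qFall_zero {u m : ℕ} (h : u < m) : qFall q (u:ℤ) m = 0 := by
  have hmem : u + 1 ∈ Finset.Icc 1 m := Finset.mem_Icc.2 ⟨by omega, by omega⟩
  rw [qFall]
  refine Finset.prod_eq_zero hmem ?_
  have : (u:ℤ) - ((u+1 : ℕ):ℤ) + 1 = 0 := by push_cast; ring
  rw [this, qInt]
  norm_num

lemma ominus_eq (β : ℝ) (m : ℕ) : ominus q β m = ∏ i ∈ Finset.range m, (1 - β * q ^ i) := by
  rw [ominus, prod_Icc_one]; simp

lemma ominus_pos {β : ℝ} (hb0 : 0 ≤ β) (hb1 : β < 1) (m : ℕ) : 0 < ominus q β m := by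
  rw [ominus_eq hq0 hq1]
  refine Finset.prod_pos fun i _ => ?_
  have h1 : q ^ i ≤ 1 := pow_le_one₀ hq0.le hq1.le
  nlinarith

lemma summable_qc {t : ℝ} (ht0 : 0 ≤ t) (ht1 : t < 1) (N : ℕ) :
    Summable (fun v => qc q N v * t ^ v) := by
  set r : ℝ := (1 + t) / 2 with hr
  have hr1 : r < 1 := by rw [hr]; linarith
  apply summable_of_ratio_norm_eventually_le hr1
  have hε : (0:ℝ) < (1 - t) / (1 + t) := div_pos (by linarith) (by linarith)
  have htend : Filter.Tendsto (fun v : ℕ => q ^ v) Filter.atTop (nhds 0) :=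
    tendsto_pow_atTop_nhds_zero_of_lt_one hq0.le hq1
  filter_upwards [htend.eventually (gt_mem_nhds hε)] with v hv
  have hfnn : 0 ≤ qc q N v * t ^ v :=
    mul_nonneg (qc_nonneg hq0 hq1 N v) (pow_nonneg ht0 v)
  have hsucc : qc q N (v+1) * t ^ (v+1)
      = (qc q N v * t ^ v) * ((1 - q ^ (N + v)) / (1 - q ^ (v+1)) * t) := by
    rw [qc, Finset.prod_range_succ, ← qc, pow_succ]; ring
  have hNv : q ^ (N + v) ≤ 1 := pow_le_one₀ hq0.le hq1.le
  have hNv0 : 0 ≤ q ^ (N + v) := pow_nonneg hq0.le _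
  have hden : (0:ℝ) < 1 - q ^ (v+1) := fact_pos hq0 hq1 v
  have hρnn : 0 ≤ (1 - q ^ (N + v)) / (1 - q ^ (v+1)) * t :=
    mul_nonneg (div_nonneg (by linarith) hden.le) ht0
  have hρ : (1 - q ^ (N + v)) / (1 - q ^ (v+1)) * t ≤ r := by
    rw [div_mul_eq_mul_div, div_le_iff₀ hden]
    have h1 : q ^ (v+1) ≤ (1 - t) / (1 + t) := by
      have h2 : q ^ (v+1) ≤ q ^ v := by
        rw [pow_succ]; nlinarith [pow_nonneg hq0.le v]
      linarith [hv.le]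
    have h2 : r * (1 - (1 - t)/(1+t)) = t := by
      rw [hr]; field_simp; ring
    have hrpos : 0 ≤ r := by rw [hr]; linarith
    have h3 : r * (1 - q ^ (v+1)) ≥ r * (1 - (1-t)/(1+t)) := by nlinarith
    nlinarith
  rw [hsucc, Real.norm_eq_abs, Real.norm_eq_abs, abs_of_nonneg hfnn,
    abs_of_nonneg (mul_nonneg hfnn hρnn)]
  calc qc q N v * t ^ v * ((1 - q ^ (N + v)) / (1 - q ^ (v+1)) * t)
      ≤ qc q N v * t ^ v * r := by nlinarith
    _ = r * (qc q N v * t ^ v) := by ring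

set_option maxHeartbeats 1000000 in
lemma hasSum_qc (N : ℕ) : ∀ t : ℝ, 0 ≤ t → t < 1 →
    HasSum (fun v => qc q N v * t ^ v) (∏ i ∈ Finset.range N, (1 - t * q ^ i))⁻¹ := by
  induction N with
  | zero =>
    intro t ht0 ht1
    simp only [Finset.range_zero, Finset.prod_empty, inv_one]
    have h := hasSum_single (f := fun v => qc q 0 v * t ^ v) 0 (fun v hv => by
      show qc q 0 v * t ^ v = 0
      have h00 : (0:ℕ) ∈ Finset.range v := Finset.mem_range.2 (Nat.pos_of_ne_zero hv)
      rw [qc, Finset.prod_eq_zero h00 (by norm_num), zero_mul])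
    convert h using 1
    simp [qc]
  | succ N IH =>
    intro t ht0 ht1
    have h1t : (0:ℝ) < 1 - t := by linarith
    have hqt0 : 0 ≤ q * t := mul_nonneg hq0.le ht0
    have hqt1 : q * t < 1 := by nlinarith
    have hc := IH (q * t) hqt0 hqt1
    set P : ℝ := ∏ i ∈ Finset.range N, (1 - q * t * q ^ i) with hPdef
    have hPpos : 0 < P := by
      refine Finset.prod_pos fun i _ => ?_
      have h1 : q ^ i ≤ 1 := pow_le_one₀ hq0.le hq1.le
      have h2 : 0 ≤ q ^ i := pow_nonneg hq0.le i
      nlinarith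
    obtain ⟨S, hS⟩ := summable_qc hq0 hq1 ht0 ht1 (N+1)
    set A : ℕ → ℝ := fun v => qc q (N+1) v * t ^ v with hAdef
    have hA0 : A 0 = 1 := by simp [hAdef, qc]
    have hc0 : qc q N 0 * (q*t) ^ 0 = 1 := by simp [qc]
    have hrec : ∀ w, A (w+1) = t * A w + qc q N (w+1) * (q*t) ^ (w+1) := by
      intro w
      set Pn : ℝ := ∏ i ∈ Finset.range w, (1 - q ^ (N+1+i)) with hPn
      set Qw : ℝ := ∏ i ∈ Finset.range w, (1 - q ^ (i+1)) with hQw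
      have hQpos : 0 < Qw := Finset.prod_pos fun i _ => fact_pos hq0 hq1 i
      have hw1 : (0:ℝ) < 1 - q ^ (w+1) := fact_pos hq0 hq1 w
      have e2 : qc q (N+1) w = Pn / Qw := by
        rw [qc, Finset.prod_div_distrib]
      have e1 : qc q (N+1) (w+1) = Pn * (1 - q ^ (N+1+w)) / (Qw * (1 - q ^ (w+1))) := by
        rw [qc, Finset.prod_div_distrib, Finset.prod_range_succ, Finset.prod_range_succ]
      have e3 : qc q N (w+1) = (1 - q ^ N) * Pn / (Qw * (1 - q ^ (w+1))) := by
        rw [qc, Finset.prod_div_distrib, Finset.prod_range_succ' (fun i => 1 - q ^ (N + i)) w,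
          Finset.prod_range_succ]
        have hnum : ∏ i ∈ Finset.range w, (1 - q ^ (N + (i+1))) = Pn := by
          refine Finset.prod_congr rfl fun i _ => ?_
          ring_nf
        rw [hnum]
        simp only [add_zero, pow_zero]
        ring
      have hgen : ∀ X Y : ℝ, Y ≠ 0 → (1:ℝ) - q ^ (w+1) ≠ 0 →
          X * (1 - q ^ (N+1+w)) / (Y * (1 - q ^ (w+1))) * t ^ (w+1)
            = t * (X / Y * t ^ w) + (1 - q ^ N) * X / (Y * (1 - q ^ (w+1))) * (q*t) ^ (w+1) := by
        intro X Y hY hw'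
        field_simp
        ring
      show qc q (N+1) (w+1) * t ^ (w+1) = t * (qc q (N+1) w * t ^ w) + qc q N (w+1) * (q*t) ^ (w+1)
      rw [e1, e2, e3]
      exact hgen Pn Qw (ne_of_gt hQpos) (ne_of_gt hw1)
    have hshiftA : HasSum (fun w => A (w+1)) (S - 1) :=
      (hasSum_nat_add_iff (f := A) 1).mpr (by simpa [hA0] using hS)
    have hshiftC : HasSum (fun w => qc q N (w+1) * (q*t) ^ (w+1))
        ((∏ i ∈ Finset.range N, (1 - q * t * q ^ i))⁻¹ - 1) :=
      (hasSum_nat_add_iff (f := fun v => qc q N v * (q*t) ^ v) 1).mpr (by simpa [qc] using hc)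
    have h2 : HasSum (fun w => t * A w + qc q N (w+1) * (q*t) ^ (w+1))
        (t * S + (P⁻¹ - 1)) := (hS.mul_left t).add hshiftC
    have hkey : S - 1 = t * S + (P⁻¹ - 1) := by
      have h1 := hshiftA
      simp_rw [hrec] at h1
      exact h1.unique h2
    have hmul : S * (1 - t) = P⁻¹ := by nlinarith [hkey]
    have hS' : S = ((1-t) * P)⁻¹ := by
      have hP' : P ≠ 0 := ne_of_gt hPpos
      have h1t' : (1:ℝ) - t ≠ 0 := ne_of_gt h1t
      refine eq_inv_of_mul_eq_one_left ?_
      calc S * ((1-t) * P) = (S * (1-t)) * P := by ring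
        _ = P⁻¹ * P := by rw [hmul]
        _ = 1 := inv_mul_cancel₀ hP'
    have hprod : ∏ i ∈ Finset.range (N+1), (1 - t * q ^ i) = (1-t) * P := by
      rw [Finset.prod_range_succ']
      have h : ∀ i ∈ Finset.range N, (1:ℝ) - t * q ^ (i+1) = 1 - q * t * q ^ i :=
        fun i _ => by ring
      rw [Finset.prod_congr rfl h]
      simp [mul_comm]
      exact Or.inl hPdef.symm
    rw [hprod, ← hS']
    exact hS

end

theorem stmt16 (q : ℝ) (hq0 : 0 < q) (hq1 : q < 1) (n : ℕ) (hn : 1 ≤ n) (β1 β2 : ℝ)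
    (hβ1 : 0 < β1) (hβ1' : β1 < 1) (hβ2 : 0 < β2) (hβ2' : β2 < 1) (m2 : ℕ) :
    HasSum (fun v : ℕ × ℕ => qFall q (v.2 : ℤ) m2 * vpmf q β1 β2 n v.1 v.2)
      (qFall q ((n : ℤ) + (m2 : ℤ) - 1) m2 * β2 ^ m2 /
        ∏ i ∈ Finset.Icc 1 m2, (1 - β2 * q ^ (n + i - 1))) := by
  have hfp := qFact_pos_s16 hq0 hq1
  have hfne : ∀ m, qFact q m ≠ 0 := fun m => ne_of_gt (hfp m)
  have hO1 : ∀ m, 0 < ominus q β1 m := ominus_pos hq0 hq1 hβ1.le hβ1'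
  have hO2 : ∀ m, 0 < ominus q β2 m := ominus_pos hq0 hq1 hβ2.le hβ2'
  set F : ℕ × ℕ → ℝ := fun v => qFall q (v.2 : ℤ) m2 * vpmf q β1 β2 n v.1 v.2 with hFdef
  set D : ℝ := ∏ i ∈ Finset.Icc 1 m2, (1 - β2 * q ^ (n + i - 1)) with hDdef
  have hDpos : 0 < D := by
    rw [hDdef]
    refine Finset.prod_pos fun i _ => ?_
    have h1 : q ^ (n + i - 1) ≤ 1 := pow_le_one₀ hq0.le hq1.le
    have h2 : 0 ≤ q ^ (n + i - 1) := pow_nonneg hq0.le _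
    nlinarith
  set S : ℝ := qFall q ((n : ℤ) + (m2 : ℤ) - 1) m2 * β2 ^ m2 / D with hSdef
  set g : ℕ → ℝ := fun v2 => qFall q (v2 : ℤ) m2 *
    (qFact q (n + v2 - 1) / (qFact q v2 * qFact q (n-1))) * β2 ^ v2 * ominus q β2 n with hgdef
  -- inner sums
  have hFeq : ∀ v2 v1, F (v1, v2) =
      (g v2 * ominus q β1 (n + v2)) * (qc q (n + v2) v1 * β1 ^ v1) := by
    intro v2 v1
    have harg : n + v1 + v2 - 1 = (n + v2 - 1) + v1 := by omega
    have harg2 : (n + v2 - 1) + 1 = n + v2 := by omega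
    simp only [hFdef, hgdef, vpmf]
    rw [harg, qFact_mul hq0 hq1 (n + v2 - 1) v1, harg2]
    field_simp [hfne v1, hfne v2, hfne (n-1), hfne (n+v2-1)]
  have hinner : ∀ v2, HasSum (fun v1 => F (v1, v2)) (g v2) := by
    intro v2
    have h := (hasSum_qc hq0 hq1 (n + v2) β1 hβ1.le hβ1').mul_left
      (g v2 * ominus q β1 (n + v2))
    have hOeq : ominus q β1 (n + v2) = ∏ i ∈ Finset.range (n + v2), (1 - β1 * q ^ i) :=
      ominus_eq hq0 hq1 β1 (n + v2)
    have hval : (g v2 * ominus q β1 (n + v2)) *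
        (∏ i ∈ Finset.range (n + v2), (1 - β1 * q ^ i))⁻¹ = g v2 := by
      rw [← hOeq]
      exact mul_div_cancel_right₀ _ (ne_of_gt (hO1 (n + v2)))
    rw [hval] at h
    have hfun : (fun v1 => F (v1, v2)) =
        fun v1 => (g v2 * ominus q β1 (n + v2)) * (qc q (n + v2) v1 * β1 ^ v1) :=
      funext (hFeq v2)
    rw [hfun]
    exact h
  have hzero : ∀ i ∈ Finset.range m2, g i = 0 := by
    intro i hi
    simp only [hgdef]
    rw [qFall_zero hq0 hq1 (Finset.mem_range.1 hi)]
    ring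
  have hfall : qFall q ((n:ℤ) + (m2:ℤ) - 1) m2 = qFact q (n+m2-1) / qFact q (n-1) := by
    have hcast : ((n:ℤ) + (m2:ℤ) - 1) = ((n + m2 - 1 : ℕ) : ℤ) := by omega
    rw [hcast]
    have h := qFall_eq hq0 hq1 (show m2 ≤ n + m2 - 1 by omega)
    rw [show n + m2 - 1 - m2 = n - 1 by omega] at h
    rw [eq_div_iff (hfne (n-1))]
    linear_combination -h
  have houter : HasSum g S := by
    set C : ℝ := qFact q (n+m2-1) / qFact q (n-1) * β2 ^ m2 * ominus q β2 n with hC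
    have hup : HasSum (fun w => g (w + m2)) S := by
      have h := (hasSum_qc hq0 hq1 (n + m2) β2 hβ2.le hβ2').mul_left C
      have hfun : ∀ w, g (w + m2) = C * (qc q (n + m2) w * β2 ^ w) := by
        intro w
        have h1 : qFall q ((w + m2 : ℕ) : ℤ) m2 = qFact q (w + m2) / qFact q w := by
          have h2 := qFall_eq hq0 hq1 (le_add_self : m2 ≤ w + m2)
          rw [show w + m2 - m2 = w by omega] at h2
          rw [eq_div_iff (hfne w)]
          linear_combination -h2
        have h2 : qFact q (n + (w + m2) - 1) = qFact q (n+m2-1) * qFact q w * qc q (n+m2) w := by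
          rw [show n + (w + m2) - 1 = (n + m2 - 1) + w by omega, qFact_mul hq0 hq1,
            show (n + m2 - 1) + 1 = n + m2 by omega]
        simp only [hgdef]
        rw [h1, h2, hC]
        field_simp [hfne w, hfne (w + m2), hfne (n-1), hfne (n+m2-1)]
        ring
      have hsplit : ∏ i ∈ Finset.range (n + m2), (1 - β2 * q ^ i) = ominus q β2 n * D := by
        rw [Finset.prod_range_add, ← ominus_eq hq0 hq1]
        congr 1
        rw [hDdef, prod_Icc_one]
        refine (Finset.prod_congr rfl fun i _ => ?_).symm
        rw [show n + (i + 1) - 1 = n + i by omega]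
      have hval : C * (∏ i ∈ Finset.range (n + m2), (1 - β2 * q ^ i))⁻¹ = S := by
        have hd : D ≠ 0 := ne_of_gt hDpos
        have ho : ominus q β2 n ≠ 0 := ne_of_gt (hO2 n)
        rw [hsplit, hSdef, hfall, hC]
        field_simp [hd, ho, hfne (n-1)]
      rw [show (fun w => g (w + m2)) = fun w => C * (qc q (n + m2) w * β2 ^ w) from
        funext hfun, ← hval]
      exact h
    have h := (hasSum_nat_add_iff (f := g) (g := S) m2).1 hup
    rwa [Finset.sum_eq_zero hzero, add_zero] at h
  have hqFallnn : ∀ v2 : ℕ, 0 ≤ qFall q (v2 : ℤ) m2 := by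
    intro v2
    rcases lt_or_ge v2 m2 with h | h
    · rw [qFall_zero hq0 hq1 h]
    · have h2 := qFall_eq hq0 hq1 h
      have h3 : qFall q (v2 : ℤ) m2 = qFact q v2 / qFact q (v2 - m2) := by
        rw [eq_div_iff (hfne _)]
        linear_combination -h2
      rw [h3]
      exact le_of_lt (div_pos (hfp _) (hfp _))
  have hgnn : ∀ v2, 0 ≤ g v2 := by
    intro v2
    simp only [hgdef]
    refine mul_nonneg (mul_nonneg (mul_nonneg (hqFallnn v2) ?_) ?_) (hO2 n).le
    · exact le_of_lt (div_pos (hfp _) (mul_pos (hfp _) (hfp _)))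
    · exact pow_nonneg hβ2.le _
  have hFnn : ∀ p : ℕ × ℕ, 0 ≤ F p := by
    intro p
    obtain ⟨v1, v2⟩ := p
    rw [hFeq v2 v1]
    exact mul_nonneg (mul_nonneg (hgnn v2) (hO1 _).le)
      (mul_nonneg (qc_nonneg hq0 hq1 _ _) (pow_nonneg hβ1.le _))
  set G : ℕ × ℕ → ℝ := fun p => F (p.2, p.1) with hGdef
  have hGnn : 0 ≤ G := fun p => hFnn _
  have hsumG : Summable G := by
    rw [summable_prod_of_nonneg hGnn]
    refine ⟨fun v2 => (hinner v2).summable, ?_⟩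
    have he : (fun v2 => ∑' v1, G (v2, v1)) = g := funext fun v2 => (hinner v2).tsum_eq
    exact he ▸ houter.summable
  have hg' : HasSum g (∑' p, G p) := hsumG.hasSum.prod_fiberwise (fun v2 => hinner v2)
  have hGS : HasSum G S := (hg'.unique houter) ▸ hsumG.hasSum
  exact (Equiv.prodComm ℕ ℕ).hasSum_iff.mp hGS
end
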